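/- If g is in the commutator subgroup of F(ℛ[t,t⁻¹]) = ⟨M₁, M₂T⟩ and g = M_g + Σᵢ≥₁ (t-1)ⁱAᵢ is its expansion in powers of (t-1), then every coefficient matrix Aᵢ has all entries in the augmentation ideal Σ of ℛ. -/

import Mathlib

open Matrix Finset

noncomputable section

/-- The Laurent polynomial ring `ℛ = ℤ[x, x⁻¹, y, y⁻¹]`, realized as the group
algebra of `ℤ × ℤ` over `ℤ`. -/
abbrev R2 : Type := AddMonoidAlgebra ℤ (ℤ × ℤ)

/-- The positive units `x^i y^j` of `ℛ`, as a homomorphism from `ℤ × ℤ`. -/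
def U : Multiplicative (ℤ × ℤ) →* R2ˣ :=
  (Units.map (AddMonoidAlgebra.of ℤ (ℤ × ℤ))).comp toUnits.toMonoidHom

/-- `x` as a unit of `ℛ`. -/
def xu : R2ˣ := U (Multiplicative.ofAdd (1, 0))
/-- `y` as a unit of `ℛ`. -/
def yu : R2ˣ := U (Multiplicative.ofAdd (0, 1))
/-- `x ∈ ℛ`. -/
def Xr : R2 := xu
/-- `y ∈ ℛ`. -/
def Yr : R2 := yu

/-- The augmentation map `ℛ → ℤ`, `x, y ↦ 1`. -/
def aug : R2 →+* ℤ := ((AddMonoidAlgebra.lift ℤ ℤ (ℤ × ℤ)) 1).toRingHom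

/-- The augmentation ideal `Σ` of `ℛ`. -/
def Saug : Ideal R2 := RingHom.ker aug

/-- The `n`-cyclotomic ideal `𝒥(n)` of `ℛ`, generated by `1 + u + ⋯ + u^(n-1)` for
positive units `u`. -/
def Cyc (n : ℕ) : Ideal R2 :=
  Ideal.span {r | ∃ m : Multiplicative (ℤ × ℤ), r = ∑ i ∈ Finset.range n, ((U m : R2)) ^ i}

/-- The matrix `M₁`. -/
def M1 : Matrix (Fin 2) (Fin 2) R2 := !![1, 1 - Yr; 0, Xr]
/-- The matrix `M₂`. -/
def M2 : Matrix (Fin 2) (Fin 2) R2 := !![Yr, 0; 1 - Xr, 1]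

/-- The matrix `[λᵢ v]` with rows `λᵢ • (1-x, 1-y)`. -/
def Nmat (a b : R2) : Matrix (Fin 2) (Fin 2) R2 :=
  !![a * (1 - Xr), a * (1 - Yr); b * (1 - Xr), b * (1 - Yr)]

/-- The row vector `v = (1-x, 1-y)`. -/
def vv : Fin 2 → R2 := ![1 - Xr, 1 - Yr]

end

/-- The ring `ℛ[t, t⁻¹]`, as Laurent polynomials over `ℛ`. -/
abbrev RT : Type := LaurentPolynomial R2

noncomputable section

/-- `x ∈ ℛ[t, t⁻¹]`. -/
def Xt : RT := LaurentPolynomial.C Xr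
/-- `y ∈ ℛ[t, t⁻¹]`. -/
def Yt : RT := LaurentPolynomial.C Yr
/-- `t ∈ ℛ[t, t⁻¹]`. -/
def tL : RT := LaurentPolynomial.T 1

/-- The matrix `M₁` over `ℛ[t, t⁻¹]`. -/
def M1T : Matrix (Fin 2) (Fin 2) RT := !![1, 1 - Yt; 0, Xt]
/-- The matrix `M₂` over `ℛ[t, t⁻¹]`. -/
def M2T : Matrix (Fin 2) (Fin 2) RT := !![Yt, 0; 1 - Xt, 1]
/-- The matrix `T`. -/
def Tm : Matrix (Fin 2) (Fin 2) RT := !![tL, 0; 1 - tL, 1]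

/-- `t = 1 + (t - 1)` as a unit of the power series ring `ℛ[[t-1]]`
(whose variable `X` plays the role of `t - 1`). -/
def uPS : (PowerSeries R2)ˣ :=
  ((PowerSeries.isUnit_iff_constantCoeff (φ := 1 + PowerSeries.X)).mpr (by simp)).unit

/-- The power series expansion `ℛ[t, t⁻¹] → ℛ[[t-1]]`, the ring homomorphism sending
`t` to `1 + X` (where `X` stands for `t - 1`); the coefficient of `X^i` in the image of
`f` is the coefficient `Aᵢ` of `(t-1)^i` in the expansion of `f` in powers of `t - 1`. -/
def phi : RT →+* PowerSeries R2 :=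
  ((AddMonoidAlgebra.lift R2 (PowerSeries R2) ℤ)
    ((Units.coeHom (PowerSeries R2)).comp (zpowersHom (PowerSeries R2)ˣ uPS))).toRingHom

/-- The derived series of a subgroup `H` of an ambient group, as subgroups of the
ambient group: `derivedSub H 0 = H`, `derivedSub H (k+1) = [derivedSub H k, derivedSub H k]`. -/
def derivedSub {G : Type*} [Group G] (H : Subgroup G) : ℕ → Subgroup G
  | 0 => H
  | k + 1 => ⁅derivedSub H k, derivedSub H k⁆

end

set_option maxRecDepth 10000

noncomputable section

/-- The composite `ℛ[t,t⁻¹] → ℤ[[X]]` applying augmentation to coefficients. -/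
def Phi : RT →+* PowerSeries ℤ := (PowerSeries.map aug).comp phi

lemma phi_C (r : R2) : phi (LaurentPolynomial.C r) = PowerSeries.C r := by
  rw [show (LaurentPolynomial.C r : RT) = AddMonoidAlgebra.single 0 r from rfl]
  rw [show phi (AddMonoidAlgebra.single 0 r) = r • _ from AddMonoidAlgebra.lift_single _ _ _]
  simp [Algebra.smul_def, PowerSeries.C_eq_algebraMap]

lemma phi_t : phi tL = (uPS : PowerSeries R2) := by
  rw [show (tL : RT) = AddMonoidAlgebra.single 1 1 from rfl]
  rw [show phi (AddMonoidAlgebra.single 1 1) = (1:R2) • _ from AddMonoidAlgebra.lift_single _ _ _]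
  simp

lemma aug_Xr : aug Xr = 1 := by
  simp [aug, Xr, xu, U, AddMonoidAlgebra.lift_single]

lemma aug_Yr : aug Yr = 1 := by
  simp [aug, Yr, yu, U, AddMonoidAlgebra.lift_single]

lemma Phi_Xt : Phi Xt = 1 := by
  simp [Phi, Xt, phi_C, aug_Xr]

lemma Phi_Yt : Phi Yt = 1 := by
  simp [Phi, Yt, phi_C, aug_Yr]

lemma Phi_M1T : Phi.mapMatrix M1T = 1 := by
  ext i j
  fin_cases i <;> fin_cases j <;>
    simp [M1T, RingHom.mapMatrix_apply, Matrix.map_apply, Phi_Xt, Phi_Yt, map_sub, Matrix.one_apply]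

lemma Phi_M2T : Phi.mapMatrix M2T = 1 := by
  ext i j
  fin_cases i <;> fin_cases j <;>
    simp [M2T, RingHom.mapMatrix_apply, Matrix.map_apply, Phi_Xt, Phi_Yt, map_sub, Matrix.one_apply]

end

/-- If `g` is in the commutator subgroup of `F(ℛ[t, t⁻¹]) = ⟨M₁, M₂T⟩` and
`g = M_g + Σ_{i≥1} (t-1)ⁱ Aᵢ` is its expansion in powers of `t - 1`, then every
coefficient matrix `Aᵢ` (`i ≥ 1`) has all entries in the augmentation ideal `Σ`. -/
theorem commutator_coefficients_in_aug
    (m1 m2t : (Matrix (Fin 2) (Fin 2) RT)ˣ)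
    (h1 : (m1 : Matrix (Fin 2) (Fin 2) RT) = M1T)
    (h2 : (m2t : Matrix (Fin 2) (Fin 2) RT) = M2T * Tm)
    (g : (Matrix (Fin 2) (Fin 2) RT)ˣ)
    (hg : g ∈ ⁅Subgroup.closure {m1, m2t}, Subgroup.closure {m1, m2t}⁆) :
    ∀ i : ℕ, 1 ≤ i → ∀ a b : Fin 2,
      PowerSeries.coeff (R := R2) i (phi ((g : Matrix (Fin 2) (Fin 2) RT) a b)) ∈ Saug := by
  set F : (Matrix (Fin 2) (Fin 2) RT)ˣ →* (Matrix (Fin 2) (Fin 2) (PowerSeries ℤ))ˣ :=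
    Units.map (Phi.mapMatrix : Matrix (Fin 2) (Fin 2) RT →+* _).toMonoidHom with hF
  have hFm1 : F m1 = 1 := by
    ext1
    simp only [hF, Units.coe_map, RingHom.toMonoidHom_eq_coe, MonoidHom.coe_coe, h1, Units.val_one]
    exact Phi_M1T
  -- F g = 1
  have key : F g = 1 := by
    have hmem : F g ∈ Subgroup.map F ⁅Subgroup.closure {m1, m2t}, Subgroup.closure {m1, m2t}⁆ :=
      Subgroup.mem_map_of_mem F hg
    rw [Subgroup.map_commutator, MonoidHom.map_closure, Set.image_pair, hFm1] at hmem
    have hle : Subgroup.closure {(1 : (Matrix (Fin 2) (Fin 2) (PowerSeries ℤ))ˣ), F m2t}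
        ≤ Subgroup.zpowers (F m2t) := by
      rw [Subgroup.closure_le]
      rintro z (rfl | rfl)
      · exact Subgroup.one_mem _
      · exact Subgroup.mem_zpowers _
    have hcomm : ⁅Subgroup.closure {(1 : (Matrix (Fin 2) (Fin 2) (PowerSeries ℤ))ˣ), F m2t},
        Subgroup.closure {(1 : (Matrix (Fin 2) (Fin 2) (PowerSeries ℤ))ˣ), F m2t}⁆ ≤ ⊥ := by
      refine le_trans (Subgroup.commutator_mono hle hle) ?_
      rw [Subgroup.commutator_le]
      rintro _ ⟨i, rfl⟩ _ ⟨j, rfl⟩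
      rw [Subgroup.mem_bot]
      exact ((Commute.refl (F m2t)).zpow_zpow i j).commutator_eq
    have := hcomm hmem
    rwa [Subgroup.mem_bot] at this
  have hmat : Phi.mapMatrix (g : Matrix (Fin 2) (Fin 2) RT) = 1 := by
    have := congrArg Units.val key
    simpa [hF] using this
  intro i hi a b
  have hent : Phi ((g : Matrix (Fin 2) (Fin 2) RT) a b)
      = (1 : Matrix (Fin 2) (Fin 2) (PowerSeries ℤ)) a b := by
    rw [← hmat]; rfl
  have : aug (PowerSeries.coeff (R := R2) i (phi ((g : Matrix (Fin 2) (Fin 2) RT) a b)))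
      = PowerSeries.coeff (R := ℤ) i (Phi ((g : Matrix (Fin 2) (Fin 2) RT) a b)) := by
    simp [Phi, PowerSeries.coeff_map]
  rw [Saug, RingHom.mem_ker, this, hent, Matrix.one_apply]
  split
  · rw [PowerSeries.coeff_one]
    simp; omega
  · simp
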